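/- Let ω be an infinite word over a finite alphabet with bounded k-Abelian complexity for a positive integer k. Then for every positive integer N, ω contains a k-Abelian N-power, i.e., a factor U = U₁U₂⋯U_N with all U_i nonempty, of equal length, and pairwise k-Abelian equivalent. -/

import Mathlib

/-- Number of occurrences of `x` as a factor of `w`. -/
def occ {A : Type*} [DecidableEq A] (w x : List A) : ℕ :=
  ((List.range (w.length + 1)).filter (fun i => decide (x <+: w.drop i))).length

/-- `k`-Abelian equivalence. -/
def KAbEq {A : Type*} [DecidableEq A] (k : ℕ) (u v : List A) : Prop :=
  ∀ x : List A, x ≠ [] → x.length ≤ k → occ u x = occ v x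

/-- `u` is a factor of the infinite word `ω`. -/
def IsFactorOf {A : Type*} (u : List A) (ω : ℕ → A) : Prop :=
  ∃ i : ℕ, u = (List.range u.length).map fun j => ω (i + j)

/-- `ω` is ultimately periodic. -/
def UltimatelyPeriodic {A : Type*} (ω : ℕ → A) : Prop :=
  ∃ p : ℕ, 1 ≤ p ∧ ∃ N : ℕ, ∀ i ≥ N, ω (i + p) = ω i

/-- The setoid of `k`-Abelian equivalence on the factors of `ω` of length `n`. -/
def factorSetoid {A : Type*} [DecidableEq A] (ω : ℕ → A) (k n : ℕ) :
    Setoid {u : List A // u.length = n ∧ IsFactorOf u ω} where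
  r u v := KAbEq k u.1 v.1
  iseqv := ⟨fun _ _ _ _ => rfl, fun h x hx hxk => (h x hx hxk).symm,
    fun h₁ h₂ x hx hxk => (h₁ x hx hxk).trans (h₂ x hx hxk)⟩

/-- The `k`-Abelian complexity of `ω`: the number of `k`-Abelian classes of
factors of `ω` of length `n`. -/
noncomputable def kabComplexity {A : Type*} [DecidableEq A] (ω : ℕ → A) (k n : ℕ) : ℕ :=
  Nat.card (Quotient (factorSetoid ω k n))

set_option linter.unusedSectionVars false
set_option linter.unusedVariables false
set_option maxHeartbeats 1000000

namespace St18x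
variable {A : Type*} [DecidableEq A]

def fw (ω : ℕ → A) (i n : ℕ) : List A := (List.range n).map fun j => ω (i + j)

@[simp] lemma fw_length (ω : ℕ → A) (i n : ℕ) : (fw ω i n).length = n := by simp [fw]

lemma fw_getElem (ω : ℕ → A) (i n t : ℕ) (h : t < (fw ω i n).length) :
    (fw ω i n)[t] = ω (i + t) := by simp [fw]

def occAt (ω : ℕ → A) (p : ℕ) (x : List A) : Prop := x = fw ω p x.length

instance (ω : ℕ → A) (p : ℕ) (x : List A) : Decidable (occAt ω p x) :=
  inferInstanceAs (Decidable (x = fw ω p x.length))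

lemma occAt_iff (ω : ℕ → A) (p : ℕ) (x : List A) :
    occAt ω p x ↔ ∀ t (h : t < x.length), x[t] = ω (p + t) := by
  constructor
  · intro h t ht
    rw [List.getElem_of_eq h ht, fw_getElem]
  · intro h
    apply List.ext_getElem (by simp)
    intro t h1 h2
    rw [fw_getElem]
    exact h t h1

lemma drop_fw (ω : ℕ → A) (i n p : ℕ) (hp : p ≤ n) :
    (fw ω i n).drop p = fw ω (i + p) (n - p) := by
  apply List.ext_getElem (by simp)
  intro t h1 h2
  rw [List.getElem_drop, fw_getElem, fw_getElem]
  ring_nf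

lemma prefix_fw_iff (ω : ℕ → A) (q m : ℕ) (x : List A) :
    x <+: fw ω q m ↔ (x.length ≤ m ∧ occAt ω q x) := by
  constructor
  · intro h
    have hl : x.length ≤ m := by simpa using h.length_le
    refine ⟨hl, ?_⟩
    rw [occAt_iff]
    intro t ht
    have := List.IsPrefix.getElem h (by omega : t < x.length)
    rw [this, fw_getElem]
  · rintro ⟨hl, h⟩
    rw [List.prefix_iff_eq_take]
    rw [occAt_iff] at h
    apply List.ext_getElem (by simp; omega)
    intro t h1 h2
    rw [List.getElem_take, fw_getElem]
    exact h t h1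

lemma length_filter_range (n : ℕ) (f : ℕ → Bool) :
    ((List.range n).filter f).length
      = ((Finset.range n).filter (fun i => f i = true)).card := by
  induction n with
  | zero => simp
  | succ n ih =>
    rw [List.range_succ, List.filter_append, List.length_append, ih, Finset.range_add_one,
      Finset.filter_insert]
    by_cases h : f n = true
    · rw [if_pos h, Finset.card_insert_of_notMem (by simp)]
      simp [h]
    · rw [if_neg h]
      simp [List.filter, h]

lemma occ_eq_card (w x : List A) :
    occ w x = ((Finset.range (w.length + 1)).filter (fun i => x <+: w.drop i)).card := by
  rw [occ, length_filter_range]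
  congr 1
  ext i
  simp

lemma occ_fw (ω : ℕ → A) (i n : ℕ) (x : List A) (hx : x ≠ []) :
    occ (fw ω i n) x
      = ((Finset.range (n + 1 - x.length)).filter (fun p => occAt ω (i + p) x)).card := by
  rw [occ_eq_card, fw_length]
  congr 1
  ext p
  simp only [Finset.mem_filter, Finset.mem_range]
  constructor
  · rintro ⟨hp, hpre⟩
    rw [drop_fw ω i n p (by omega), prefix_fw_iff] at hpre
    have hxl : 1 ≤ x.length := List.length_pos_iff.mpr hx
    exact ⟨by omega, hpre.2⟩
  · rintro ⟨hp, hocc⟩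
    have hxl : 1 ≤ x.length := List.length_pos_iff.mpr hx
    refine ⟨by omega, ?_⟩
    rw [drop_fw ω i n p (by omega), prefix_fw_iff]
    exact ⟨by omega, hocc⟩


def psiF (ω : ℕ → A) (x : List A) (m : ℕ) : ℕ :=
  ((Finset.range (m + 1 - x.length)).filter (fun p => occAt ω p x)).card

def cross (ω : ℕ → A) (i : ℕ) (x : List A) : ℕ :=
  ((Finset.Ico (i + 1 - x.length) i).filter (fun p => occAt ω p x)).card

lemma psi_mono (ω : ℕ → A) (x : List A) {m m' : ℕ} (h : m ≤ m') :
    psiF ω x m ≤ psiF ω x m' :=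
  Finset.card_le_card (Finset.filter_subset_filter _ (Finset.range_subset_range.2 (by omega)))

lemma psi_succ_le (ω : ℕ → A) (x : List A) (m : ℕ) :
    psiF ω x (m + 1) ≤ psiF ω x m + 1 := by
  unfold psiF
  calc ((Finset.range (m + 1 + 1 - x.length)).filter (fun p => occAt ω p x)).card
      ≤ ((insert (m + 1 - x.length) (Finset.range (m + 1 - x.length))).filter
          (fun p => occAt ω p x)).card := by
        apply Finset.card_le_card
        apply Finset.filter_subset_filter
        intro p hp
        simp only [Finset.mem_range] at hp
        simp only [Finset.mem_insert, Finset.mem_range]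
        omega
    _ ≤ ((Finset.range (m + 1 - x.length)).filter (fun p => occAt ω p x)).card + 1 := by
        rw [Finset.filter_insert]
        split_ifs
        · exact Finset.card_insert_le _ _
        · omega

lemma card_filter_Ico_shift (a m : ℕ) (P : ℕ → Prop) [DecidablePred P] :
    ((Finset.Ico a (a + m)).filter P).card
      = ((Finset.range m).filter (fun t => P (a + t))).card := by
  apply Finset.card_bij' (fun p _ => p - a) (fun t _ => a + t)
  · intro p hp
    simp only [Finset.mem_filter, Finset.mem_Ico] at hp
    simp only [Finset.mem_filter, Finset.mem_range]
    have h1 : a + (p - a) = p := by omega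
    rw [h1]
    exact ⟨by omega, hp.2⟩
  · intro t ht
    simp only [Finset.mem_filter, Finset.mem_range] at ht
    simp only [Finset.mem_filter, Finset.mem_Ico]
    exact ⟨⟨by omega, by omega⟩, ht.2⟩
  · intro p hp
    simp only [Finset.mem_filter, Finset.mem_Ico] at hp
    omega
  · intro t ht
    omega

lemma psi_split (ω : ℕ → A) (x : List A) (i ℓ : ℕ) (hx : x ≠ [])
    (hxi : x.length ≤ i) (hxl : x.length ≤ ℓ) :
    psiF ω x (i + ℓ) = psiF ω x i + cross ω i x + occ (fw ω i ℓ) x := by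
  have hxl1 : 1 ≤ x.length := List.length_pos_iff.mpr hx
  have h1 : Finset.range (i + ℓ + 1 - x.length)
      = Finset.Ico 0 (i + 1 - x.length) ∪ Finset.Ico (i + 1 - x.length) i
        ∪ Finset.Ico i (i + ℓ + 1 - x.length) := by
    rw [Finset.Ico_union_Ico_eq_Ico (by omega) (by omega),
        Finset.Ico_union_Ico_eq_Ico (by omega) (by omega), Finset.range_eq_Ico]
  unfold psiF
  rw [h1, Finset.filter_union, Finset.filter_union, Finset.card_union_of_disjoint,
      Finset.card_union_of_disjoint]
  · have e1 : Finset.Ico 0 (i + 1 - x.length) = Finset.range (i + 1 - x.length) := by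
      rw [Finset.range_eq_Ico]
    have e3 : ((Finset.Ico i (i + ℓ + 1 - x.length)).filter (fun p => occAt ω p x)).card
        = occ (fw ω i ℓ) x := by
      have : i + ℓ + 1 - x.length = i + (ℓ + 1 - x.length) := by omega
      rw [this, card_filter_Ico_shift, occ_fw ω i ℓ x hx]
    rw [e1, e3]
    rfl
  · exact Finset.disjoint_filter_filter (Finset.Ico_disjoint_Ico_consecutive _ _ _)
  · rw [Finset.disjoint_union_left]
    constructor <;>
      · apply Finset.disjoint_filter_filter
        rw [Finset.disjoint_left]
        intro p hp hp2
        simp only [Finset.mem_Ico] at hp hp2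
        omega


lemma isFactorOf_fw (ω : ℕ → A) (i n : ℕ) : IsFactorOf (fw ω i n) ω := by
  refine ⟨i, ?_⟩
  rw [fw_length]
  rfl

lemma cross_lt (ω : ℕ → A) (i : ℕ) (x : List A) (hx : x ≠ []) (hxi : x.length ≤ i) :
    cross ω i x < x.length := by
  have h1 : 1 ≤ x.length := List.length_pos_iff.mpr hx
  calc cross ω i x ≤ (Finset.Ico (i + 1 - x.length) i).card := Finset.card_filter_le _ _
    _ < x.length := by rw [Nat.card_Ico]; omega

lemma cross_shift (ω : ℕ → A) (i : ℕ) (x : List A) (hx : x ≠ []) (hxi : x.length ≤ i) :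
    cross ω i x = ((Finset.range (x.length - 1)).filter
      (fun t => occAt ω ((i + 1 - x.length) + t) x)).card := by
  have h1 : 1 ≤ x.length := List.length_pos_iff.mpr hx
  unfold cross
  rw [show Finset.Ico (i + 1 - x.length) i
      = Finset.Ico (i + 1 - x.length) ((i + 1 - x.length) + (x.length - 1)) from by
    congr 1; omega]
  exact card_filter_Ico_shift _ _ _

lemma walk_ivt (f : ℕ → ℕ) (hf : ∀ t, f (t + 1) ≤ f t + 1 ∧ f t ≤ f (t + 1) + 1)
    (i d v : ℕ) (hv : (f i ≤ v ∧ v ≤ f (i + d)) ∨ (f (i + d) ≤ v ∧ v ≤ f i)) :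
    ∃ t, t ≤ d ∧ f (i + t) = v := by
  induction d with
  | zero =>
    simp only [Nat.add_zero] at hv
    exact ⟨0, le_refl _, by simp only [Nat.add_zero]; omega⟩
  | succ d ih =>
    have hs := hf (i + d)
    have he : i + (d + 1) = (i + d) + 1 := rfl
    rw [he] at hv
    by_cases h : (f i ≤ v ∧ v ≤ f (i + d)) ∨ (f (i + d) ≤ v ∧ v ≤ f i)
    · obtain ⟨t, ht1, ht2⟩ := ih h
      exact ⟨t, by omega, ht2⟩
    · refine ⟨d + 1, le_refl _, ?_⟩
      rw [he]
      omega

lemma eq_of_dvd_close (B d e : ℕ) (hd : B ∣ d) (he : B ∣ e)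
    (h1 : d ≤ e + (B - 1)) (h2 : e ≤ d + (B - 1)) : d = e := by
  obtain ⟨p, rfl⟩ := hd
  obtain ⟨q, rfl⟩ := he
  rcases Nat.lt_trichotomy p q with h | h | h
  · have hle : B * p + B ≤ B * q := by
      calc B * p + B = B * (p + 1) := by ring
        _ ≤ B * q := Nat.mul_le_mul_left _ h
    omega
  · rw [h]
  · have hle : B * q + B ≤ B * p := by
      calc B * q + B = B * (q + 1) := by ring
        _ ≤ B * p := Nat.mul_le_mul_left _ h
    omega

variable [Fintype A]

lemma factors_finite (ω : ℕ → A) (n : ℕ) :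
    Finite {u : List A // u.length = n ∧ IsFactorOf u ω} := by
  apply Finite.of_injective (fun u => (fun t : Fin n => u.1[(t : ℕ)]'(by rw [u.2.1]; exact t.2)))
  intro u v h
  apply Subtype.ext
  apply List.ext_getElem (by rw [u.2.1, v.2.1])
  intro t h1 h2
  have := congrFun h ⟨t, by rw [← u.2.1]; exact h1⟩
  exact this

lemma d_bounded (ω : ℕ → A) (k C : ℕ) (hC : ∀ n, kabComplexity ω k n ≤ C)
    (x : List A) (hx : x ≠ []) (hxk : x.length ≤ k) (n : ℕ) (hn : k ≤ n)
    (i i' : ℕ) (hi : k ≤ i) (hi' : k ≤ i') :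
    cross ω i' x + occ (fw ω i' n) x ≤ cross ω i x + occ (fw ω i n) x + (C * k - 1) := by
  classical
  set f : ℕ → ℕ := fun m => psiF ω x (m + n) - psiF ω x m with hfdef
  have hfd : ∀ m, k ≤ m → f m = cross ω m x + occ (fw ω m n) x := by
    intro m hm
    have hs := psi_split ω x m n hx (le_trans hxk hm) (le_trans hxk hn)
    have hmono := psi_mono ω x (show m ≤ m + n by omega)
    simp only [hfdef]
    omega
  have hstep : ∀ t, f (t + 1) ≤ f t + 1 ∧ f t ≤ f (t + 1) + 1 := by
    intro t
    have e1 : psiF ω x (t + 1 + n) = psiF ω x (t + n + 1) := congrArg _ (by ring)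
    have s1 := psi_succ_le ω x (t + n)
    have s2 := psi_succ_le ω x t
    have m1 := psi_mono ω x (show t ≤ t + n by omega)
    have m2 := psi_mono ω x (show t + 1 ≤ t + n + 1 by omega)
    have m3 := psi_mono ω x (show t + n ≤ t + n + 1 by omega)
    have m4 := psi_mono ω x (show t ≤ t + 1 by omega)
    simp only [hfdef]
    rw [e1]
    omega
  haveI := factors_finite ω n
  haveI : Finite (Quotient (factorSetoid ω k n)) := Quotient.finite _
  haveI : Fintype (Quotient (factorSetoid ω k n)) := Fintype.ofFinite _
  let occQ : Quotient (factorSetoid ω k n) → ℕ :=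
    Quotient.lift (fun u => occ u.1 x) (fun u v huv => huv x hx hxk)
  let V : Finset ℕ := Finset.image
    (fun pc : Quotient (factorSetoid ω k n) × Fin k => (pc.2 : ℕ) + occQ pc.1) Finset.univ
  have hk1 : 1 ≤ k := le_trans (List.length_pos_iff.mpr hx) hxk
  have hVcard : V.card ≤ C * k := by
    calc V.card ≤ (Finset.univ : Finset (Quotient (factorSetoid ω k n) × Fin k)).card :=
          Finset.card_image_le
      _ = Fintype.card (Quotient (factorSetoid ω k n)) * k := by
          rw [Finset.card_univ, Fintype.card_prod, Fintype.card_fin]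
      _ ≤ C * k := by
          apply Nat.mul_le_mul_right
          rw [← Nat.card_eq_fintype_card]
          exact hC n
  have hmem : ∀ m, k ≤ m → f m ∈ V := by
    intro m hm
    rw [hfd m hm]
    apply Finset.mem_image.mpr
    refine ⟨(⟦⟨fw ω m n, by simp, isFactorOf_fw ω m n⟩⟧,
      ⟨cross ω m x, lt_of_lt_of_le (cross_lt ω m x hx (le_trans hxk hm)) hxk⟩),
      Finset.mem_univ _, rfl⟩
  have hdi := hfd i hi
  have hdi' := hfd i' hi'
  by_cases hle : f i' ≤ f i
  · omega
  · have hsub : Finset.Icc (f i) (f i') ⊆ V := by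
      intro v hv
      rw [Finset.mem_Icc] at hv
      rcases le_total i i' with h | h
      · obtain ⟨t, ht, hft⟩ := walk_ivt f hstep i (i' - i) v
          (Or.inl ⟨hv.1, by rw [show i + (i' - i) = i' from by omega]; exact hv.2⟩)
        rw [← hft]
        exact hmem (i + t) (by omega)
      · obtain ⟨t, ht, hft⟩ := walk_ivt f hstep i' (i - i') v
          (Or.inr ⟨by rw [show i' + (i - i') = i from by omega]; exact hv.1, hv.2⟩)
        rw [← hft]
        exact hmem (i' + t) (by omega)
    have hcard := Finset.card_le_card hsub
    rw [Nat.card_Icc] at hcard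
    omega

end St18x

open St18x in
theorem stmt18 {A : Type*} [Fintype A] [DecidableEq A] (ω : ℕ → A) (k : ℕ) (hk : 1 ≤ k)
    (hbdd : ∃ C : ℕ, ∀ n : ℕ, kabComplexity ω k n ≤ C) (N : ℕ) (hN : 1 ≤ N) :
    ∃ i ℓ : ℕ, 1 ≤ ℓ ∧ ∀ j₁ j₂ : ℕ, j₁ < N → j₂ < N →
      KAbEq k ((List.range ℓ).map fun j => ω (i + j₁ * ℓ + j))
        ((List.range ℓ).map fun j => ω (i + j₂ * ℓ + j)) := by
  classical
  obtain ⟨C, hC⟩ := hbdd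
  -- C is positive
  have hC1 : 1 ≤ C := by
    haveI := factors_finite ω 0
    haveI : Finite (Quotient (factorSetoid ω k 0)) := Quotient.finite _
    haveI : Nonempty (Quotient (factorSetoid ω k 0)) :=
      ⟨⟦⟨[], by simp, ⟨0, by simp⟩⟩⟧⟩
    have h2 : 0 < kabComplexity ω k 0 := Nat.card_pos
    have h3 := hC 0
    omega
  set B := C * k with hBdef
  have hB1 : 1 ≤ B := Nat.mul_pos hC1 hk
  haveI : NeZero B := ⟨by omega⟩
  -- van der Waerden
  obtain ⟨a, ha, b, c, hmono⟩ := Combinatorics.exists_mono_homothetic_copy (M := ℕ)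
    (Finset.range (N + 1))
    (fun m => ((fun t : Fin (2 * k) => ω (k * m + (t : ℕ))),
      (fun σ : (Σ nn : Fin k, (Fin (nn.1 + 1) → A)) =>
        ((psiF ω (List.ofFn σ.2) (k * m + k) : ℕ) : ZMod B))))
  simp only [smul_eq_mul] at hmono
  have hmem0 : (0 : ℕ) ∈ Finset.range (N + 1) := by simp
  -- the pair equality between scale j and scale 0
  have hpair : ∀ j, j ≤ N →
      ((fun t : Fin (2 * k) => ω (k * (a * j + b) + (t : ℕ))),
        (fun σ : (Σ nn : Fin k, (Fin (nn.1 + 1) → A)) =>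
          ((psiF ω (List.ofFn σ.2) (k * (a * j + b) + k) : ℕ) : ZMod B)))
      = ((fun t : Fin (2 * k) => ω (k * (a * 0 + b) + (t : ℕ))),
        (fun σ : (Σ nn : Fin k, (Fin (nn.1 + 1) → A)) =>
          ((psiF ω (List.ofFn σ.2) (k * (a * 0 + b) + k) : ℕ) : ZMod B))) := by
    intro j hj
    exact (hmono j (by simp only [Finset.mem_range]; omega)).trans (hmono 0 hmem0).symm
  have hwin : ∀ j, j ≤ N → ∀ u : Fin (2 * k),
      ω (k * (a * j + b) + (u : ℕ)) = ω (k * (a * 0 + b) + (u : ℕ)) := by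
    intro j hj u
    exact congrFun (congrArg Prod.fst (hpair j hj)) u
  -- the key claim
  have hocc : ∀ j, j ≤ N → ∀ x : List A, x ≠ [] → x.length ≤ k → j < N →
      occ (fw ω (k * (a * j + b) + k) (k * a)) x
        = occ (fw ω (k * (a * 0 + b) + k) (k * a)) x := by
    intro j hjN x hx hxk hj
    have hL1 : 1 ≤ x.length := List.length_pos_iff.mpr hx
    -- residue equality for this x
    have hpsi : ∀ j', j' ≤ N →
        ((psiF ω x (k * (a * j' + b) + k) : ℕ) : ZMod B)
          = ((psiF ω x (k * (a * 0 + b) + k) : ℕ) : ZMod B) := by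
      intro j' hj'
      have hvlt : x.length - 1 < k := by omega
      let vx : Fin ((x.length - 1) + 1) → A := fun s => x[(s : ℕ)]'(by omega)
      have hofn : List.ofFn vx = x := by
        apply List.ext_getElem (by simp; omega)
        intro t h1 h2
        simp only [List.getElem_ofFn, vx]
      have h5 := congrFun (congrArg Prod.snd (hpair j' hj'))
        ⟨⟨x.length - 1, hvlt⟩, vx⟩
      simp only at h5
      rw [hofn] at h5
      exact h5
    -- positivity facts
    have hka : k ≤ k * a := by
      calc k = k * 1 := by ring
        _ ≤ k * a := Nat.mul_le_mul_left _ ha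
    have hposj : ∀ j' : ℕ, k ≤ k * (a * j' + b) + k := fun j' => by omega
    -- splitting identity at scale j'
    have hsplit : ∀ j', j' ≤ N → j' < N →
        psiF ω x (k * (a * (j' + 1) + b) + k)
          = psiF ω x (k * (a * j' + b) + k) + cross ω (k * (a * j' + b) + k) x
            + occ (fw ω (k * (a * j' + b) + k) (k * a)) x := by
      intro j' hj'N hj'
      have hsp := psi_split ω x (k * (a * j' + b) + k) (k * a) hx
        (le_trans hxk (hposj j')) (le_trans hxk hka)
      rw [show k * (a * j' + b) + k + k * a = k * (a * (j' + 1) + b) + k from by ring] at hsp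
      exact hsp
    -- divisibility of the d quantity
    have hdvd : ∀ j', j' ≤ N → j' < N →
        B ∣ (cross ω (k * (a * j' + b) + k) x + occ (fw ω (k * (a * j' + b) + k) (k * a)) x) := by
      intro j' hj'N hj'
      rw [← ZMod.natCast_eq_zero_iff]
      have h4 := congrArg (fun z : ℕ => ((z : ℕ) : ZMod B)) (hsplit j' hj'N hj')
      simp only [Nat.cast_add] at h4
      have hA := hpsi (j' + 1) (by omega)
      have hBB := hpsi j' hj'N
      rw [hA, hBB] at h4
      push_cast at h4 ⊢
      linear_combination h4.symm
    -- boundedness of the d quantity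
    have hbd := fun (j' : ℕ) (h1 : k ≤ k * (a * j' + b) + k) =>
      d_bounded ω k C hC x hx hxk (k * a) hka
    have h1 := hdvd j hjN hj
    have h0 := hdvd 0 (by omega) (by omega)
    have hb1 := hbd j (hposj j) (k * (a * 0 + b) + k) (k * (a * j + b) + k)
      (hposj 0) (hposj j)
    have hb2 := hbd 0 (hposj 0) (k * (a * j + b) + k) (k * (a * 0 + b) + k)
      (hposj j) (hposj 0)
    have heq := eq_of_dvd_close B _ _ h1 h0 (by omega) (by omega)
    -- cross terms are equal via the window
    have hcross : cross ω (k * (a * j + b) + k) x = cross ω (k * (a * 0 + b) + k) x := by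
      rw [cross_shift ω _ x hx (le_trans hxk (hposj j)),
          cross_shift ω _ x hx (le_trans hxk (hposj 0))]
      congr 1
      apply Finset.filter_congr
      intro t ht
      simp only [Finset.mem_range] at ht
      have hpt : ∀ s, s < x.length →
          ω ((k * (a * j + b) + k + 1 - x.length) + t + s)
            = ω ((k * (a * 0 + b) + k + 1 - x.length) + t + s) := by
        intro s hs
        have hu : (k + 1 - x.length) + t + s < 2 * k := by omega
        have e1 : (k * (a * j + b) + k + 1 - x.length) + t + s
            = k * (a * j + b) + ((k + 1 - x.length) + t + s) := by omega
        have e2 : (k * (a * 0 + b) + k + 1 - x.length) + t + s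
            = k * (a * 0 + b) + ((k + 1 - x.length) + t + s) := by omega
        rw [e1, e2]
        exact hwin j hjN ⟨(k + 1 - x.length) + t + s, hu⟩
      rw [occAt_iff, occAt_iff]
      constructor
      · intro h s hs
        rw [h s hs, hpt s hs]
      · intro h s hs
        rw [h s hs, ← hpt s hs]
    omega
  -- final assembly
  refine ⟨k * b + k, k * a, by
    have : 0 < k * a := Nat.mul_pos hk ha
    omega, ?_⟩
  intro j₁ j₂ h₁ h₂ x hx hxk
  have e1 : k * b + k + j₁ * (k * a) = k * (a * j₁ + b) + k := by ring
  have e2 : k * b + k + j₂ * (k * a) = k * (a * j₂ + b) + k := by ring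
  rw [e1, e2]
  exact (hocc j₁ (by omega) x hx hxk h₁).trans (hocc j₂ (by omega) x hx hxk h₂).symm
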